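/- Assume s < 0 and let p = 1_{B₁} − 1_{B₂} ∈ ℝ^V. Then for every i ∈ V: if i ∈ B₁ then ⟨p, y_i⟩ = n(i, B₁) − s > 0; if i ∈ B₂ then ⟨p, y_i⟩ = s − n(i, B₂) < 0; and if i ∈ B₃ ∪ C then ⟨p, y_i⟩ = 0. -/

import Mathlib

open scoped RealInnerProductSpace

/-- The `i`-th column of `y = A - s·I`, where `A` is the real adjacency matrix of `G`,
viewed as a point of Euclidean space `ℝ^V`. -/
noncomputable def srgCol {V : Type*} [Fintype V] [DecidableEq V]
    (G : SimpleGraph V) [DecidableRel G.Adj] (s : ℝ) (i : V) : EuclideanSpace ℝ V :=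
  (WithLp.equiv 2 (V → ℝ)).symm fun j => (G.adjMatrix ℝ - s • (1 : Matrix V V ℝ)) j i


/-- The affine dimension of a point set: the finrank of the direction of its affine span. -/
noncomputable def adim {V : Type*} [Fintype V] (X : Set (EuclideanSpace ℝ V)) : ℕ :=
  Module.finrank ℝ (affineSpan ℝ X).direction


/-- `nN G i U` is the number of neighbours of `i` lying in `U`. -/
noncomputable def nN {V : Type*} (G : SimpleGraph V) (i : V) (U : Set V) : ℕ :=
  {j ∈ U | G.Adj i j}.ncard


private lemma nN_sum {V : Type*} [Fintype V] [DecidableEq V]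
    (G : SimpleGraph V) [DecidableRel G.Adj] (i : V) (U : Set V) [DecidablePred (· ∈ U)] :
    (nN G i U : ℝ) = ∑ j, (if j ∈ U then (1:ℝ) else 0) * (if G.Adj j i then 1 else 0) := by
  classical
  have : {j ∈ U | G.Adj i j} = {j | j ∈ U ∧ G.Adj j i} := by
    ext j; simp [SimpleGraph.adj_comm]
  rw [nN, this, Set.ncard_eq_toFinset_card', Set.toFinset_setOf]
  rw [Finset.card_filter]
  push_cast
  apply Finset.sum_congr rfl
  intro j _
  by_cases h1 : j ∈ U <;> by_cases h2 : G.Adj j i <;> simp [h1, h2]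

theorem stmt_9 {V : Type*} [Fintype V] [DecidableEq V]
    (G : SimpleGraph V) [DecidableRel G.Adj] (v k l m : ℕ)
    (hG : G.IsSRGWith v k l m) (s : ℝ) (hs : s < 0)
    (B₁ B₂ B₃ C : Set V)
    (hcover : B₁ ∪ B₂ ∪ B₃ ∪ C = Set.univ)
    (hd₁₂ : Disjoint B₁ B₂) (hd₁₃ : Disjoint B₁ B₃) (hd₁C : Disjoint B₁ C)
    (hd₂₃ : Disjoint B₂ B₃) (hd₂C : Disjoint B₂ C) (hd₃C : Disjoint B₃ C)
    (hB₁₂ : ∀ i ∈ B₁, ∀ j ∈ B₂, ¬G.Adj i j)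
    (hB₁₃ : ∀ i ∈ B₁, ∀ j ∈ B₃, ¬G.Adj i j)
    (hB₂₃ : ∀ i ∈ B₂, ∀ j ∈ B₃, ¬G.Adj i j)
    (hC : ∀ i ∈ C, nN G i B₁ = nN G i B₂ ∧ nN G i B₂ = nN G i B₃)
    (p : EuclideanSpace ℝ V)
    (hp : p = (WithLp.equiv 2 (V → ℝ)).symm (B₁.indicator 1 - B₂.indicator 1))
    (i : V) :
    (i ∈ B₁ → ⟪p, srgCol G s i⟫ = (nN G i B₁ : ℝ) - s ∧ 0 < ⟪p, srgCol G s i⟫) ∧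
    (i ∈ B₂ → ⟪p, srgCol G s i⟫ = s - (nN G i B₂ : ℝ) ∧ ⟪p, srgCol G s i⟫ < 0) ∧
    (i ∈ B₃ ∪ C → ⟪p, srgCol G s i⟫ = 0) := by
  classical
  have hne₂ : i ∈ B₁ → nN G i B₂ = 0 := by
    intro hi
    have : {j ∈ B₂ | G.Adj i j} = ∅ := by
      ext j; simp only [Set.mem_setOf_eq, Set.mem_empty_iff_false, iff_false, not_and]
      intro hj; exact hB₁₂ i hi j hj
    rw [nN, this, Set.ncard_empty]
  have hne₁ : i ∈ B₂ → nN G i B₁ = 0 := by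
    intro hi
    have : {j ∈ B₁ | G.Adj i j} = ∅ := by
      ext j; simp only [Set.mem_setOf_eq, Set.mem_empty_iff_false, iff_false, not_and]
      intro hj hadj; exact hB₁₂ j hj i hi hadj.symm
    rw [nN, this, Set.ncard_empty]
  have key : ⟪p, srgCol G s i⟫ = (nN G i B₁ : ℝ) - (nN G i B₂ : ℝ)
      - s * ((if i ∈ B₁ then (1:ℝ) else 0) - (if i ∈ B₂ then (1:ℝ) else 0)) := by
    rw [hp, nN_sum, nN_sum]
    have h3 : ∀ (U : Set V), (if i ∈ U then (1:ℝ) else 0)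
        = ∑ j, (if j ∈ U then (1:ℝ) else 0) * (if j = i then 1 else 0) := by
      intro U
      simp [mul_ite, mul_one, mul_zero, Finset.sum_ite_eq']
    rw [h3 B₁, h3 B₂]
    simp only [srgCol, PiLp.inner_apply, WithLp.equiv_symm_apply, WithLp.ofLp_toLp, RCLike.inner_apply,
      conj_trivial, Pi.sub_apply, Set.indicator_apply, Pi.one_apply,
      Matrix.sub_apply, Matrix.smul_apply, Matrix.one_apply, SimpleGraph.adjMatrix_apply,
      smul_eq_mul]
    rw [← Finset.sum_sub_distrib, ← Finset.sum_sub_distrib, Finset.mul_sum,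
      ← Finset.sum_sub_distrib]
    apply Finset.sum_congr rfl
    intro j _
    ring
  refine ⟨fun hi => ?_, fun hi => ?_, fun hi => ?_⟩
  · have h2 : i ∉ B₂ := Set.disjoint_left.mp hd₁₂ hi
    rw [key, hne₂ hi]
    simp only [hi, h2, if_true, if_false]
    constructor
    · push_cast; ring
    · have := Nat.cast_nonneg (α := ℝ) (nN G i B₁)
      push_cast
      nlinarith
  · have h1 : i ∉ B₁ := Set.disjoint_right.mp hd₁₂ hi
    rw [key, hne₁ hi]
    simp only [hi, h1, if_true, if_false]
    constructor
    · push_cast; ring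
    · have := Nat.cast_nonneg (α := ℝ) (nN G i B₂)
      push_cast
      nlinarith
  · rcases hi with hi | hi
    · have h1 : i ∉ B₁ := Set.disjoint_right.mp hd₁₃ hi
      have h2 : i ∉ B₂ := Set.disjoint_right.mp hd₂₃ hi
      have e1 : nN G i B₁ = 0 := by
        have : {j ∈ B₁ | G.Adj i j} = ∅ := by
          ext j; simp only [Set.mem_setOf_eq, Set.mem_empty_iff_false, iff_false, not_and]
          intro hj hadj; exact hB₁₃ j hj i hi hadj.symm
        rw [nN, this, Set.ncard_empty]
      have e2 : nN G i B₂ = 0 := by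
        have : {j ∈ B₂ | G.Adj i j} = ∅ := by
          ext j; simp only [Set.mem_setOf_eq, Set.mem_empty_iff_false, iff_false, not_and]
          intro hj hadj; exact hB₂₃ j hj i hi hadj.symm
        rw [nN, this, Set.ncard_empty]
      rw [key, e1, e2]
      simp [h1, h2]
    · have h1 : i ∉ B₁ := Set.disjoint_right.mp hd₁C hi
      have h2 : i ∉ B₂ := Set.disjoint_right.mp hd₂C hi
      rw [key, (hC i hi).1]
      simp [h1, h2]
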